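/- Let R be a commutative ring and let 𝔸 = (A_1,…,A_a) and 𝔹 = (B_1,…,B_b) be tuples of elements of R such that A_i = B_j for some indices i and j. Then Σ_{α ∈ P(a,b)} (−1)^{|α̂^t|} s_α(𝔸) · s_{α̂^t}(𝔹) = 0. -/

import Mathlib

open Finset

/-- Complete homogeneous symmetric polynomial `h_k` of a tuple
(sum of all monomials of degree `k`). -/
noncomputable def hh {R : Type*} [CommRing R] {n : ℕ} (A : Fin n → R) (k : ℕ) : R :=
  ∑ c ∈ Finset.Nat.antidiagonalTuple n k, ∏ i, A i ^ c i

/-- Elementary symmetric polynomial `e_k` of a tuple. -/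
noncomputable def ee {R : Type*} [CommRing R] {n : ℕ} (A : Fin n → R) (k : ℕ) : R :=
  ∑ s ∈ Finset.powersetCard k (Finset.univ : Finset (Fin n)), ∏ i ∈ s, A i

/-- `h` with integer index, vanishing for negative index. -/
noncomputable def hZ {R : Type*} [CommRing R] {n : ℕ} (A : Fin n → R) (k : ℤ) : R :=
  if 0 ≤ k then hh A k.toNat else 0

/-- The Schur polynomial of a partition `α` with at most `ℓ` parts, evaluated at a
tuple, defined via the Jacobi–Trudi formula `s_α = det (h_{α_i + j - i})`. -/
noncomputable def schur {R : Type*} [CommRing R] {n ℓ : ℕ} (A : Fin n → R)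
    (α : Fin ℓ → ℕ) : R :=
  Matrix.det (Matrix.of fun i j : Fin ℓ => hZ A ((α i : ℤ) + (j : ℕ) - (i : ℕ)))

/-- `P(a,b)`: partitions with at most `a` parts, each of size at most `b`,
recorded as weakly decreasing functions `Fin a → ℕ` with values `≤ b`. -/
def box (a b : ℕ) : Finset (Fin a → ℕ) :=
  ((Finset.univ : Finset (Fin a → Fin (b + 1))).image fun f i => ((f i : ℕ))).filter
    fun α => ∀ i j : Fin a, i ≤ j → α j ≤ α i

/-- The transpose of a partition with at most `a` parts, recorded with `b` parts:
`(α^t)_j = #{i | α_i > j}` (0-indexed). -/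
def tr {a : ℕ} (b : ℕ) (α : Fin a → ℕ) : Fin b → ℕ :=
  fun j => (Finset.univ.filter fun i : Fin a => (j : ℕ) < α i).card

/-- The complement `α̂` of a partition `α ∈ P(a,b)` inside the `a × b` box:
`α̂_{a+1-j} = b - α_j`. -/
def boxCompl {a : ℕ} (b : ℕ) (α : Fin a → ℕ) : Fin a → ℕ :=
  fun i => b - α i.rev

/-- `α̂^t ∈ P(b,a)`: the transpose of the complement of `α ∈ P(a,b)`. -/
def compTr (a b : ℕ) (α : Fin a → ℕ) : Fin b → ℕ :=
  tr b (boxCompl b α)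

/-- The number of boxes `|α|` of a partition. -/
def wt {a : ℕ} (α : Fin a → ℕ) : ℕ := ∑ i, α i

section PS
variable {R : Type*} [CommRing R]

open PowerSeries

/-- geometric series inverse -/
lemma geom_inv (x : R) :
    (1 - PowerSeries.C x * PowerSeries.X) * PowerSeries.mk (fun k => x ^ k) = 1 := by
  ext n
  rw [sub_mul, one_mul, mul_assoc, map_sub, PowerSeries.coeff_C_mul]
  cases n with
  | zero => simp
  | succ m => simp [PowerSeries.coeff_succ_X_mul, pow_succ, mul_comm]

noncomputable def Hser {n : ℕ} (A : Fin n → R) : PowerSeries R :=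
  PowerSeries.mk (fun m => hh A m)

lemma Hser_eq_prod {n : ℕ} (A : Fin n → R) :
    Hser A = ∏ i, PowerSeries.mk (fun k => A i ^ k) := by
  ext d
  rw [PowerSeries.coeff_prod, Hser, PowerSeries.coeff_mk]
  unfold hh
  refine Finset.sum_nbij' (fun c => Finsupp.equivFunOnFinite.symm c) (fun l => ⇑l) ?_ ?_ ?_ ?_ ?_
  · intro c hc
    rw [Finset.Nat.mem_antidiagonalTuple] at hc
    simp [Finset.mem_finsuppAntidiag, hc]
  · intro l hl
    rw [Finset.mem_finsuppAntidiag] at hl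
    rw [Finset.Nat.mem_antidiagonalTuple]
    simpa [Finsupp.sum_fintype] using hl.1
  · intro c _; exact Equiv.apply_symm_apply Finsupp.equivFunOnFinite c
  · intro l _; simp
  · intro c _
    simp [PowerSeries.coeff_mk]

noncomputable def Eser {n : ℕ} (A : Fin n → R) : PowerSeries R :=
  ∏ i, (1 - PowerSeries.C (A i) * PowerSeries.X)

lemma Eser_mul_Hser {n : ℕ} (A : Fin n → R) : Eser A * Hser A = 1 := by
  rw [Hser_eq_prod, Eser, ← Finset.prod_mul_distrib]
  rw [Finset.prod_congr rfl (fun i _ => geom_inv (A i)), Finset.prod_const_one]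

end PS

section Pker
variable {R : Type*} [CommRing R]

lemma coeff_prod_one_sub {ι : Type*} (s : Finset ι) (x : ι → R) (M : ℕ) (hM : s.card < M) :
    PowerSeries.coeff M (∏ i ∈ s, (1 - PowerSeries.C (x i) * PowerSeries.X)) = 0 := by
  have h : (∏ i ∈ s, (1 - PowerSeries.C (x i) * PowerSeries.X)) =
      ((∏ i ∈ s, (1 - Polynomial.C (x i) * Polynomial.X) : Polynomial R) : PowerSeries R) := by
    rw [← Polynomial.coeToPowerSeries.ringHom_apply, map_prod]
    simp
  rw [h, Polynomial.coeff_coe]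
  apply Polynomial.coeff_eq_zero_of_natDegree_lt
  calc (∏ i ∈ s, (1 - Polynomial.C (x i) * Polynomial.X)).natDegree
      ≤ ∑ i ∈ s, (1 - Polynomial.C (x i) * Polynomial.X).natDegree :=
        Polynomial.natDegree_prod_le _ _
    _ ≤ ∑ _i ∈ s, 1 := by
        refine Finset.sum_le_sum fun i _ => ?_
        refine le_trans (Polynomial.natDegree_sub_le _ _) ?_
        simp [Polynomial.natDegree_C_mul_le]
        exact le_trans (Polynomial.natDegree_C_mul_le _ _) Polynomial.natDegree_X_le
    _ = s.card := by simp
    _ < M := hM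

variable {a b : ℕ}

noncomputable def Pker (A : Fin a → R) (i₀ : Fin a) (B : Fin b → R) : PowerSeries R :=
  (∏ i ∈ Finset.univ.erase i₀, (1 - PowerSeries.C (A i) * PowerSeries.X)) * Eser B

lemma Pker_mul_HserA (A : Fin a → R) (B : Fin b → R) (i₀ : Fin a) (j₀ : Fin b)
    (hAB : A i₀ = B j₀) :
    Pker A i₀ B * Hser A
      = ∏ j ∈ Finset.univ.erase j₀, (1 - PowerSeries.C (B j) * PowerSeries.X) := by
  have h1 : Eser B = (∏ j ∈ Finset.univ.erase j₀, (1 - PowerSeries.C (B j) * PowerSeries.X))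
      * (1 - PowerSeries.C (B j₀) * PowerSeries.X) :=
    (Finset.prod_erase_mul _ _ (Finset.mem_univ j₀)).symm
  have h2 : (∏ i ∈ Finset.univ.erase i₀, (1 - PowerSeries.C (A i) * PowerSeries.X))
      * (1 - PowerSeries.C (A i₀) * PowerSeries.X) = Eser A :=
    Finset.prod_erase_mul _ _ (Finset.mem_univ i₀)
  have h3 : Pker A i₀ B * Hser A
      = (∏ j ∈ Finset.univ.erase j₀, (1 - PowerSeries.C (B j) * PowerSeries.X))
        * (Eser A * Hser A) := by
    rw [Pker, h1, ← hAB, ← h2]; ring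
  rw [h3, Eser_mul_Hser, mul_one]

lemma Pker_mul_HserB (A : Fin a → R) (B : Fin b → R) (i₀ : Fin a) (j₀ : Fin b)
    (hAB : A i₀ = B j₀) :
    Pker A i₀ B * Hser B
      = ∏ i ∈ Finset.univ.erase i₀, (1 - PowerSeries.C (A i) * PowerSeries.X) := by
  have h3 : Pker A i₀ B * Hser B
      = (∏ i ∈ Finset.univ.erase i₀, (1 - PowerSeries.C (A i) * PowerSeries.X))
        * (Eser B * Hser B) := by
    rw [Pker]; ring
  rw [h3, Eser_mul_Hser, mul_one]

lemma Pker_constantCoeff (A : Fin a → R) (i₀ : Fin a) (B : Fin b → R) :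
    PowerSeries.coeff 0 (Pker A i₀ B) = 1 := by
  rw [PowerSeries.coeff_zero_eq_constantCoeff, Pker, Eser, map_mul, map_prod, map_prod]
  simp

end Pker

section DetZero
variable {R : Type*} [CommRing R] {a b : ℕ}

lemma hZ_sub_coe {n : ℕ} (X : Fin n → R) (m s : ℕ) :
    hZ X ((m : ℤ) - s) = if s ≤ m then hh X (m - s) else 0 := by
  unfold hZ
  by_cases h : s ≤ m
  · rw [if_pos (by omega), if_pos h]
    congr 1
    omega
  · rw [if_neg (by omega), if_neg h]

/-- The big `(a+b) × (a+b)` matrix of `h`'s of `A` and of `B`. -/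
noncomputable def Dmat (A : Fin a → R) (B : Fin b → R) :
    Matrix (Fin a ⊕ Fin b) (Fin a ⊕ Fin b) R :=
  Matrix.of fun r c =>
    match r with
    | .inl i => hZ A (((finSumFinEquiv c : ℕ) : ℤ) - ((a - 1 - (i : ℕ) : ℕ) : ℤ))
    | .inr j => hZ B (((finSumFinEquiv c : ℕ) : ℤ) - ((b - 1 - (j : ℕ) : ℕ) : ℤ))

lemma rowdot {n : ℕ} (X : Fin n → R) (P : PowerSeries R) (s : ℕ) (hs : s < a + b) :
    ∑ m ∈ Finset.range (a + b), hZ X ((m : ℤ) - s) * PowerSeries.coeff (a + b - 1 - m) P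
      = PowerSeries.coeff (a + b - 1 - s) (P * Hser X) := by
  rw [PowerSeries.coeff_mul]
  rw [← Finset.sum_filter_of_ne (p := fun m => s ≤ m)
    (by intro m _ hne; by_contra hc; rw [hZ_sub_coe, if_neg (by omega), zero_mul] at hne
        exact hne rfl)]
  refine Finset.sum_nbij' (fun m => (a + b - 1 - m, m - s)) (fun q => q.2 + s) ?_ ?_ ?_ ?_ ?_
  · intro m hm
    simp only [Finset.mem_filter, Finset.mem_range] at hm
    rw [Finset.HasAntidiagonal.mem_antidiagonal]
    dsimp only
    omega
  · intro q hq
    rw [Finset.HasAntidiagonal.mem_antidiagonal] at hq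
    simp only [Finset.mem_filter, Finset.mem_range]
    omega
  · intro m hm
    simp only [Finset.mem_filter, Finset.mem_range] at hm
    dsimp only
    omega
  · intro q hq
    rw [Finset.HasAntidiagonal.mem_antidiagonal] at hq
    rw [Prod.ext_iff]
    constructor <;> (dsimp only; omega)
  · intro m hm
    simp only [Finset.mem_filter, Finset.mem_range] at hm
    rw [hZ_sub_coe, if_pos hm.2, Hser, PowerSeries.coeff_mk, mul_comm]

lemma det_Dmat_zero (A : Fin a → R) (B : Fin b → R)
    (h : ∃ (i : Fin a) (j : Fin b), A i = B j) : (Dmat A B).det = 0 := by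
  obtain ⟨i₀, j₀, hAB⟩ := h
  have ha : 0 < a := i₀.pos
  have hb : 0 < b := j₀.pos
  set P := Pker A i₀ B with hP
  set v : Fin a ⊕ Fin b → R :=
    fun c => PowerSeries.coeff (a + b - 1 - (finSumFinEquiv c : ℕ)) P with hv
  have hrow : ∀ {n : ℕ} (X : Fin n → R) (s : ℕ), s < a + b →
      ∑ c : Fin a ⊕ Fin b,
        hZ X (((finSumFinEquiv c : ℕ) : ℤ) - (s : ℤ)) * v c
        = PowerSeries.coeff (a + b - 1 - s) (P * Hser X) := by
    intro n X s hs
    rw [← rowdot X P s hs, ← Fin.sum_univ_eq_sum_range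
      (fun m => hZ X ((m : ℤ) - s) * PowerSeries.coeff (a + b - 1 - m) P)]
    exact Fintype.sum_equiv finSumFinEquiv _ _ (fun c => rfl)
  have hmv : (Dmat A B).mulVec v = 0 := by
    funext r
    show ∑ c, Dmat A B r c * v c = 0
    match r with
    | .inl i =>
      have hsum := hrow A (a - 1 - (i : ℕ)) (by omega)
      rw [Pker_mul_HserA A B i₀ j₀ hAB] at hsum
      have hcard : (Finset.univ.erase j₀).card < a + b - 1 - (a - 1 - (i : ℕ)) := by
        rw [Finset.card_erase_of_mem (Finset.mem_univ j₀), Finset.card_univ, Fintype.card_fin]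
        have : (i : ℕ) < a := i.isLt
        omega
      rw [coeff_prod_one_sub _ _ _ hcard] at hsum
      exact hsum
    | .inr j =>
      have hsum := hrow B (b - 1 - (j : ℕ)) (by omega)
      rw [Pker_mul_HserB A B i₀ j₀ hAB] at hsum
      have hcard : (Finset.univ.erase i₀).card < a + b - 1 - (b - 1 - (j : ℕ)) := by
        rw [Finset.card_erase_of_mem (Finset.mem_univ i₀), Finset.card_univ, Fintype.card_fin]
        have : (j : ℕ) < b := j.isLt
        omega
      rw [coeff_prod_one_sub _ _ _ hcard] at hsum
      exact hsum
  have hsmul : (Dmat A B).det • v = 0 := by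
    have h1 := congrArg ((Matrix.adjugate (Dmat A B)).mulVec) hmv
    rwa [Matrix.mulVec_mulVec, Matrix.adjugate_mul, Matrix.smul_mulVec,
      Matrix.one_mulVec, Matrix.mulVec_zero] at h1
  have hlast : v (finSumFinEquiv.symm ⟨a + b - 1, by omega⟩) = 1 := by
    rw [hv]
    simp only [Equiv.apply_symm_apply]
    rw [Nat.sub_self]
    exact Pker_constantCoeff A i₀ B
  have := congrFun hsmul (finSumFinEquiv.symm ⟨a + b - 1, by omega⟩)
  simp only [Pi.smul_apply, smul_eq_mul, Pi.zero_apply, hlast, mul_one] at this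
  exact this

end DetZero

section Comb
variable {a b : ℕ}

lemma mem_box_iff {α : Fin a → ℕ} :
    α ∈ _root_.box a b ↔ (∀ i, α i ≤ b) ∧ ∀ i j : Fin a, i ≤ j → α j ≤ α i := by
  unfold _root_.box
  rw [Finset.mem_filter]
  constructor
  · rintro ⟨h1, h2⟩
    refine ⟨?_, h2⟩
    rw [Finset.mem_image] at h1
    obtain ⟨f, _, rfl⟩ := h1
    intro i; exact Nat.lt_succ_iff.mp (f i).isLt
  · rintro ⟨h1, h2⟩
    refine ⟨?_, h2⟩
    rw [Finset.mem_image]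
    exact ⟨fun i => ⟨α i, Nat.lt_succ_of_le (h1 i)⟩, Finset.mem_univ _, rfl⟩

/-- count of indices with `m ≤ α i` -/
def cnt (α : Fin a → ℕ) (m : ℕ) : ℕ := (Finset.univ.filter fun i => m ≤ α i).card

lemma cnt_le (α : Fin a → ℕ) (m : ℕ) : cnt α m ≤ a := by
  classical
  calc cnt α m ≤ (Finset.univ : Finset (Fin a)).card := Finset.card_filter_le _ _
  _ = a := by simp

lemma cnt_antitone (α : Fin a → ℕ) {m m' : ℕ} (h : m ≤ m') : cnt α m' ≤ cnt α m := by
  apply Finset.card_le_card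
  intro i hi
  simp only [Finset.mem_filter, Finset.mem_univ, true_and] at hi ⊢
  omega

lemma lt_cnt_iff {α : Fin a → ℕ} (hdec : ∀ i j : Fin a, i ≤ j → α j ≤ α i)
    (i : Fin a) (m : ℕ) : (i : ℕ) < cnt α m ↔ m ≤ α i := by
  constructor
  · intro h
    by_contra hc
    have hsub : (Finset.univ.filter fun i' : Fin a => m ≤ α i') ⊆ Finset.Iio i := by
      intro i' hi'
      simp only [Finset.mem_filter, Finset.mem_univ, true_and] at hi'
      rw [Finset.mem_Iio]
      by_contra hc2
      exact hc (le_trans hi' (hdec i i' (le_of_not_gt hc2)))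
    have := Finset.card_le_card hsub
    rw [Fin.card_Iio] at this
    exact absurd (lt_of_lt_of_le h this) (lt_irrefl _)
  · intro h
    have hsub : Finset.Iic i ⊆ (Finset.univ.filter fun i' : Fin a => m ≤ α i') := by
      intro i' hi'
      rw [Finset.mem_Iic] at hi'
      simp only [Finset.mem_filter, Finset.mem_univ, true_and]
      exact le_trans h (hdec i' i hi')
    have := Finset.card_le_card hsub
    rw [Fin.card_Iic] at this
    unfold cnt
    omega

lemma compTr_apply (α : Fin a → ℕ) (j : Fin b) :
    compTr a b α j = a - cnt α (b - (j : ℕ)) := by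
  unfold compTr tr boxCompl
  have h1 : (Finset.univ.filter fun i : Fin a => (j : ℕ) < b - α i.rev)
      = Finset.image Fin.rev (Finset.univ.filter fun i : Fin a => (j : ℕ) < b - α i) := by
    ext i
    simp only [Finset.mem_filter, Finset.mem_image, Finset.mem_univ, true_and]
    constructor
    · intro h
      exact ⟨i.rev, h, Fin.rev_rev i⟩
    · rintro ⟨x, hx, rfl⟩
      rwa [Fin.rev_rev]
  rw [h1, Finset.card_image_of_injective _ Fin.rev_injective]
  have hsplit := Finset.card_filter_add_card_filter_not
    (s := (Finset.univ : Finset (Fin a))) (p := fun i => b - (j : ℕ) ≤ α i)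
  have hcongr : (Finset.univ.filter fun i : Fin a => (j : ℕ) < b - α i)
      = (Finset.univ.filter fun i : Fin a => ¬ (b - (j : ℕ) ≤ α i)) := by
    apply Finset.filter_congr
    intro i _
    have := j.isLt
    constructor <;> (intro; omega)
  rw [hcongr]
  unfold cnt
  rw [Finset.card_univ, Fintype.card_fin] at hsplit
  omega

lemma compTr_le_a (α : Fin a → ℕ) (j : Fin b) : compTr a b α j ≤ a := by
  rw [compTr_apply]; omega

end Comb

section FC
variable {a b : ℕ}

/-- The column positions associated to a partition in the box. -/
def fC (a b : ℕ) (α : Fin a → ℕ) : Fin a ⊕ Fin b → ℕ :=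
  Sum.elim (fun i => α i + (a - 1 - (i : ℕ))) (fun j => compTr a b α j + (b - 1 - (j : ℕ)))

lemma fC_lt {α : Fin a → ℕ} (hb : ∀ i, α i ≤ b) (r : Fin a ⊕ Fin b) :
    fC a b α r < a + b := by
  match r with
  | .inl i =>
    have h1 := hb i
    have h2 := i.isLt
    simp only [fC, Sum.elim_inl]
    omega
  | .inr j =>
    have h1 := compTr_le_a (b := b) α j
    have h2 := j.isLt
    simp only [fC, Sum.elim_inr]
    omega

lemma fC_strictAnti_inl {α : Fin a → ℕ} (hdec : ∀ i j : Fin a, i ≤ j → α j ≤ α i)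
    {i i' : Fin a} (h : i < i') : fC a b α (.inl i') < fC a b α (.inl i) := by
  have := hdec i i' (le_of_lt h)
  have h2 := i'.isLt
  have h3 : (i : ℕ) < (i' : ℕ) := h
  simp only [fC, Sum.elim_inl]
  omega

lemma fC_strictAnti_inr {α : Fin a → ℕ} {j j' : Fin b} (h : j < j') :
    fC a b α (.inr j') < fC a b α (.inr j) := by
  have h1 : compTr a b α j' ≤ compTr a b α j := by
    rw [compTr_apply, compTr_apply]
    have h2 : (j : ℕ) < b := j.isLt
    have h3 : (j' : ℕ) < b := j'.isLt
    have h4 : cnt α (b - (j : ℕ)) ≤ cnt α (b - (j' : ℕ)) := cnt_antitone α (by omega)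
    omega
  have h2 := j'.isLt
  have h3 : (j : ℕ) < (j' : ℕ) := h
  simp only [fC, Sum.elim_inr]
  omega

lemma fC_disjoint {α : Fin a → ℕ} (hdec : ∀ i j : Fin a, i ≤ j → α j ≤ α i)
    (i : Fin a) (j : Fin b) : fC a b α (.inl i) ≠ fC a b α (.inr j) := by
  simp only [fC, Sum.elim_inl, Sum.elim_inr]
  rw [compTr_apply]
  have hc := cnt_le α (b - (j : ℕ))
  have hi := i.isLt
  have hj := j.isLt
  by_cases hcase : (i : ℕ) < cnt α (b - (j : ℕ))
  · have := (lt_cnt_iff hdec i (b - (j : ℕ))).mp hcase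
    omega
  · have : ¬ (b - (j : ℕ) ≤ α i) := fun hle => hcase ((lt_cnt_iff hdec i _).mpr hle)
    omega

lemma fC_injective {α : Fin a → ℕ} (hdec : ∀ i j : Fin a, i ≤ j → α j ≤ α i) :
    Function.Injective (fC a b α) := by
  intro r r' h
  match r, r' with
  | .inl i, .inl i' =>
    rcases lt_trichotomy i i' with hlt | heq | hgt
    · exact absurd h (ne_of_gt (fC_strictAnti_inl hdec hlt))
    · rw [heq]
    · exact absurd h (ne_of_lt (fC_strictAnti_inl hdec hgt))
  | .inl i, .inr j => exact absurd h (fC_disjoint hdec i j)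
  | .inr j, .inl i => exact absurd h.symm (fC_disjoint hdec i j)
  | .inr j, .inr j' =>
    rcases lt_trichotomy j j' with hlt | heq | hgt
    · exact absurd h (ne_of_gt (fC_strictAnti_inr hlt))
    · rw [heq]
    · exact absurd h (ne_of_lt (fC_strictAnti_inr hgt))

/-- `fC` as an equivalence onto `Fin (a+b)`. -/
noncomputable def eC (α : Fin a → ℕ) (hα : α ∈ _root_.box a b) :
    (Fin a ⊕ Fin b) ≃ Fin (a + b) :=
  Equiv.ofBijective (fun r => ⟨fC a b α r, fC_lt (mem_box_iff.mp hα).1 r⟩)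
    (by
      refine (Fintype.bijective_iff_injective_and_card _).mpr ⟨?_, by simp⟩
      intro r r' h
      exact fC_injective (mem_box_iff.mp hα).2 (congrArg Fin.val h))

lemma eC_apply (α : Fin a → ℕ) (hα : α ∈ _root_.box a b) (r : Fin a ⊕ Fin b) :
    (eC α hα r : ℕ) = fC a b α r := rfl

/-- The shuffle permutation associated to `α`. -/
noncomputable def rC (α : Fin a → ℕ) (hα : α ∈ _root_.box a b) :
    Equiv.Perm (Fin a ⊕ Fin b) :=
  (eC α hα).trans finSumFinEquiv.symm

end FC

section Laplace
variable {a b : ℕ}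

lemma strictMono_gap {k N : ℕ} {u : Fin k → Fin N} (hu : StrictMono u) :
    ∀ (d : ℕ) (i j : Fin k), (j : ℕ) = (i : ℕ) + d → (u i : ℕ) + d ≤ (u j : ℕ) := by
  intro d
  induction d with
  | zero =>
    intro i j hij
    have : i = j := Fin.ext (by omega)
    rw [this]
    omega
  | succ d ih =>
    intro i j hij
    have hjlt := j.isLt
    have hj : (i : ℕ) + d < k := by omega
    have h1 := ih i ⟨(i : ℕ) + d, hj⟩ rfl
    have h2 : u ⟨(i : ℕ) + d, hj⟩ < u j := hu (by rw [Fin.lt_iff_val_lt_val]; simp; omega)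
    rw [Fin.lt_iff_val_lt_val] at h2
    omega

/-- A strictly decreasing function runs through orderEmbOfFin reversed. -/
lemma orderEmb_eq_of_strictAnti {k N : ℕ} (T : Finset (Fin N)) (h : T.card = k)
    (v : Fin k → Fin N) (hanti : ∀ {x y : Fin k}, x < y → v y < v x)
    (hmem : ∀ x, v x ∈ T) (x : Fin k) : T.orderEmbOfFin h x = v x.rev := by
  have hmono : StrictMono (fun x : Fin k => v x.rev) := by
    intro x y hxy
    exact hanti (by rw [Fin.lt_iff_val_lt_val] at hxy ⊢; simp [Fin.rev]; omega)
  have := Finset.orderEmbOfFin_unique h (f := fun x : Fin k => v x.rev)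
    (fun x => hmem _) hmono
  exact (congrFun this x).symm

variable (a b) in
/-- the `A`-side column set of a permutation -/
noncomputable def Sset (π : Equiv.Perm (Fin a ⊕ Fin b)) : Finset (Fin (a + b)) :=
  Finset.univ.image fun i : Fin a => finSumFinEquiv (π (.inl i))

variable (a b) in
noncomputable def Tset (π : Equiv.Perm (Fin a ⊕ Fin b)) : Finset (Fin (a + b)) :=
  Finset.univ.image fun j : Fin b => finSumFinEquiv (π (.inr j))

lemma card_Sset (π : Equiv.Perm (Fin a ⊕ Fin b)) : (Sset a b π).card = a := by
  rw [Sset, Finset.card_image_of_injective _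
    (fun i i' h => Sum.inl_injective (π.injective (finSumFinEquiv.injective h)))]
  simp

lemma card_Tset (π : Equiv.Perm (Fin a ⊕ Fin b)) : (Tset a b π).card = b := by
  rw [Tset, Finset.card_image_of_injective _
    (fun j j' h => Sum.inr_injective (π.injective (finSumFinEquiv.injective h)))]
  simp

lemma Tset_eq (π : Equiv.Perm (Fin a ⊕ Fin b)) :
    Tset a b π = Finset.univ \ Sset a b π := by
  apply Finset.eq_of_subset_of_card_le
  · intro x hx
    rw [Tset, Finset.mem_image] at hx
    obtain ⟨j, _, rfl⟩ := hx
    rw [Finset.mem_sdiff]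
    refine ⟨Finset.mem_univ _, ?_⟩
    rw [Sset, Finset.mem_image]
    rintro ⟨i, _, hi⟩
    exact (Sum.inl_ne_inr (π.injective (finSumFinEquiv.injective hi)))
  · rw [Finset.card_sdiff_of_subset (Finset.subset_univ _), card_Sset, card_Tset, Finset.card_univ]
    simp

variable (a b) in
/-- the partition recovered from a permutation -/
noncomputable def alph (π : Equiv.Perm (Fin a ⊕ Fin b)) : Fin a → ℕ :=
  fun i => ((Sset a b π).orderEmbOfFin (card_Sset π) i.rev : ℕ) + (i : ℕ) + 1 - a

lemma emb_low {k N : ℕ} {T : Finset (Fin N)} {h : T.card = k} (x : Fin k) :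
    (x : ℕ) ≤ (T.orderEmbOfFin h x : ℕ) := by
  have hpos : 0 < k := lt_of_le_of_lt (Nat.zero_le _) x.isLt
  have := strictMono_gap (T.orderEmbOfFin h).strictMono (x : ℕ) ⟨0, hpos⟩ x (by simp)
  omega

lemma emb_high {k N : ℕ} {T : Finset (Fin N)} {h : T.card = k} (x : Fin k) :
    (T.orderEmbOfFin h x : ℕ) + (k - 1 - (x : ℕ)) ≤ N - 1 := by
  have hpos : 0 < k := lt_of_le_of_lt (Nat.zero_le _) x.isLt
  have hx := x.isLt
  have h1 := strictMono_gap (T.orderEmbOfFin h).strictMono (k - 1 - (x : ℕ)) x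
    ⟨k - 1, by omega⟩ (by simp; omega)
  have h2 : (T.orderEmbOfFin h ⟨k - 1, by omega⟩ : ℕ) < N :=
    (T.orderEmbOfFin h ⟨k - 1, by omega⟩).isLt
  omega

lemma alph_mem_box (π : Equiv.Perm (Fin a ⊕ Fin b)) : alph a b π ∈ _root_.box a b := by
  rw [mem_box_iff]
  constructor
  · intro i
    have h1 := emb_high (T := Sset a b π) (h := card_Sset π) i.rev
    have hi := i.isLt
    unfold alph
    have h2 : (i.rev : ℕ) = a - 1 - (i : ℕ) := by
      simp [Fin.rev]; omega
    rw [h2] at h1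
    omega
  · intro i j hij
    have hij' : (i : ℕ) ≤ (j : ℕ) := hij
    have hi := i.isLt
    have hj := j.isLt
    unfold alph
    rcases Nat.eq_or_lt_of_le hij' with heq | hlt
    · have : i = j := Fin.ext heq
      rw [this]
    · have hrev : (j.rev : ℕ) + ((j : ℕ) - (i : ℕ)) = (i.rev : ℕ) := by
        simp [Fin.rev]; omega
      have := strictMono_gap ((Sset a b π).orderEmbOfFin (card_Sset π)).strictMono
        ((j : ℕ) - (i : ℕ)) j.rev i.rev (by omega)
      omega

lemma fC_alph_inl (π : Equiv.Perm (Fin a ⊕ Fin b)) (i : Fin a) :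
    fC a b (alph a b π) (.inl i) = ((Sset a b π).orderEmbOfFin (card_Sset π) i.rev : ℕ) := by
  have h1 := emb_low (T := Sset a b π) (h := card_Sset π) i.rev
  have h2 : (i.rev : ℕ) = a - 1 - (i : ℕ) := by simp [Fin.rev]; omega
  have hi := i.isLt
  rw [h2] at h1
  simp only [fC, Sum.elim_inl, alph]
  omega

end Laplace

section Laplace2
variable {a b : ℕ}

lemma eC_alph_inl (π : Equiv.Perm (Fin a ⊕ Fin b)) (i : Fin a) :
    eC (alph a b π) (alph_mem_box π) (.inl i)
      = (Sset a b π).orderEmbOfFin (card_Sset π) i.rev :=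
  Fin.ext (by rw [eC_apply, fC_alph_inl])

lemma eC_alph_inl_mem (π : Equiv.Perm (Fin a ⊕ Fin b)) (i : Fin a) :
    eC (alph a b π) (alph_mem_box π) (.inl i) ∈ Sset a b π := by
  rw [eC_alph_inl]
  exact Finset.orderEmbOfFin_mem _ _ _

lemma eC_alph_inr_not_mem (π : Equiv.Perm (Fin a ⊕ Fin b)) (j : Fin b) :
    eC (alph a b π) (alph_mem_box π) (.inr j) ∉ Sset a b π := by
  intro hmem
  have hrange : ∃ k, (Sset a b π).orderEmbOfFin (card_Sset π) k
      = eC (alph a b π) (alph_mem_box π) (.inr j) := by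
    have hr := Finset.range_orderEmbOfFin (Sset a b π) (card_Sset π)
    have : (eC (alph a b π) (alph_mem_box π) (.inr j) : Fin (a+b)) ∈
        Set.range ⇑((Sset a b π).orderEmbOfFin (card_Sset π)) := by
      rw [hr]
      exact hmem
    exact this
  obtain ⟨k, hk⟩ := hrange
  have h1 : fC a b (alph a b π) (.inl k.rev) = fC a b (alph a b π) (.inr j) := by
    have := congrArg Fin.val hk
    rw [eC_apply] at this
    rw [fC_alph_inl, Fin.rev_rev]
    exact this
  exact fC_disjoint (mem_box_iff.mp (alph_mem_box π)).2 k.rev j h1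

lemma eC_alph_inr_mem (π : Equiv.Perm (Fin a ⊕ Fin b)) (j : Fin b) :
    eC (alph a b π) (alph_mem_box π) (.inr j) ∈ Tset a b π := by
  rw [Tset_eq, Finset.mem_sdiff]
  exact ⟨Finset.mem_univ _, eC_alph_inr_not_mem π j⟩

lemma eC_alph_inr (π : Equiv.Perm (Fin a ⊕ Fin b)) (j : Fin b) :
    eC (alph a b π) (alph_mem_box π) (.inr j)
      = (Tset a b π).orderEmbOfFin (card_Tset π) j.rev := by
  have := orderEmb_eq_of_strictAnti (Tset a b π) (card_Tset π)
    (fun j => eC (alph a b π) (alph_mem_box π) (.inr j))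
    (fun {x y} hxy => by
      rw [Fin.lt_iff_val_lt_val, eC_apply, eC_apply]
      exact fC_strictAnti_inr hxy)
    (fun x => eC_alph_inr_mem π x) j.rev
  rw [Fin.rev_rev] at this
  exact this.symm

variable (a b) in
noncomputable def sigm (π : Equiv.Perm (Fin a ⊕ Fin b)) : Equiv.Perm (Fin a) :=
  ((Equiv.ofBijective
      (fun i : Fin a => (⟨finSumFinEquiv (π (.inl i)), by
          rw [Sset, Finset.mem_image]; exact ⟨i, Finset.mem_univ _, rfl⟩⟩
        : {x // x ∈ Sset a b π}))
      ((Fintype.bijective_iff_injective_and_card _).mpr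
        ⟨fun i i' h => Sum.inl_injective (π.injective (finSumFinEquiv.injective
            (congrArg Subtype.val h))),
         by rw [Fintype.card_coe, card_Sset]; simp⟩)).trans
    ((Sset a b π).orderIsoOfFin (card_Sset π)).symm.toEquiv).trans
    (Fin.revPerm)

variable (a b) in
noncomputable def taum (π : Equiv.Perm (Fin a ⊕ Fin b)) : Equiv.Perm (Fin b) :=
  ((Equiv.ofBijective
      (fun j : Fin b => (⟨finSumFinEquiv (π (.inr j)), by
          rw [Tset, Finset.mem_image]; exact ⟨j, Finset.mem_univ _, rfl⟩⟩
        : {x // x ∈ Tset a b π}))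
      ((Fintype.bijective_iff_injective_and_card _).mpr
        ⟨fun j j' h => Sum.inr_injective (π.injective (finSumFinEquiv.injective
            (congrArg Subtype.val h))),
         by rw [Fintype.card_coe, card_Tset]; simp⟩)).trans
    ((Tset a b π).orderIsoOfFin (card_Tset π)).symm.toEquiv).trans
    (Fin.revPerm)

lemma eC_sigm (π : Equiv.Perm (Fin a ⊕ Fin b)) (i : Fin a) :
    eC (alph a b π) (alph_mem_box π) (.inl (sigm a b π i))
      = finSumFinEquiv (π (.inl i)) := by
  rw [eC_alph_inl]
  simp only [sigm, Equiv.trans_apply, Fin.revPerm_apply, Fin.rev_rev]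
  rw [← Finset.coe_orderIsoOfFin_apply]
  simp

lemma eC_taum (π : Equiv.Perm (Fin a ⊕ Fin b)) (j : Fin b) :
    eC (alph a b π) (alph_mem_box π) (.inr (taum a b π j))
      = finSumFinEquiv (π (.inr j)) := by
  rw [eC_alph_inr]
  simp only [taum, Equiv.trans_apply, Fin.revPerm_apply, Fin.rev_rev]
  rw [← Finset.coe_orderIsoOfFin_apply]
  simp

end Laplace2

section Laplace3
variable {a b : ℕ}

variable (a b) in
noncomputable def Phi (α : Fin a → ℕ) (hα : α ∈ _root_.box a b)
    (σ : Equiv.Perm (Fin a)) (τ : Equiv.Perm (Fin b)) : Equiv.Perm (Fin a ⊕ Fin b) :=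
  (Equiv.sumCongr σ τ).trans (rC α hα)

lemma Phi_inl (α : Fin a → ℕ) (hα : α ∈ _root_.box a b) (σ : Equiv.Perm (Fin a))
    (τ : Equiv.Perm (Fin b)) (i : Fin a) :
    Phi a b α hα σ τ (.inl i) = finSumFinEquiv.symm (eC α hα (.inl (σ i))) := rfl

lemma Phi_inr (α : Fin a → ℕ) (hα : α ∈ _root_.box a b) (σ : Equiv.Perm (Fin a))
    (τ : Equiv.Perm (Fin b)) (j : Fin b) :
    Phi a b α hα σ τ (.inr j) = finSumFinEquiv.symm (eC α hα (.inr (τ j))) := rfl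

lemma Phi_RT2 (π : Equiv.Perm (Fin a ⊕ Fin b)) :
    Phi a b (alph a b π) (alph_mem_box π) (sigm a b π) (taum a b π) = π := by
  apply Equiv.ext
  intro r
  match r with
  | .inl i =>
    rw [Phi_inl, eC_sigm]
    simp
  | .inr j =>
    rw [Phi_inr, eC_taum]
    simp

/-- the S-set of `Phi` -/
lemma Sset_Phi (α : Fin a → ℕ) (hα : α ∈ _root_.box a b) (σ : Equiv.Perm (Fin a))
    (τ : Equiv.Perm (Fin b)) :
    Sset a b (Phi a b α hα σ τ) = Finset.univ.image (fun i : Fin a => eC α hα (.inl i)) := by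
  unfold Sset
  ext x
  simp only [Finset.mem_image, Finset.mem_univ, true_and, Phi_inl, Equiv.apply_symm_apply]
  constructor
  · rintro ⟨i, rfl⟩; exact ⟨σ i, rfl⟩
  · rintro ⟨i, rfl⟩; exact ⟨σ.symm i, by rw [Equiv.apply_symm_apply]⟩

lemma Tset_Phi (α : Fin a → ℕ) (hα : α ∈ _root_.box a b) (σ : Equiv.Perm (Fin a))
    (τ : Equiv.Perm (Fin b)) :
    Tset a b (Phi a b α hα σ τ) = Finset.univ.image (fun j : Fin b => eC α hα (.inr j)) := by
  unfold Tset
  ext x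
  simp only [Finset.mem_image, Finset.mem_univ, true_and, Phi_inr, Equiv.apply_symm_apply]
  constructor
  · rintro ⟨j, rfl⟩; exact ⟨τ j, rfl⟩
  · rintro ⟨j, rfl⟩; exact ⟨τ.symm j, by rw [Equiv.apply_symm_apply]⟩

lemma embS_Phi (α : Fin a → ℕ) (hα : α ∈ _root_.box a b) (σ : Equiv.Perm (Fin a))
    (τ : Equiv.Perm (Fin b)) (x : Fin a) :
    (Sset a b (Phi a b α hα σ τ)).orderEmbOfFin (card_Sset _) x = eC α hα (.inl x.rev) := by
  apply orderEmb_eq_of_strictAnti _ _ (fun i => eC α hα (.inl i))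
  · intro x y hxy
    rw [Fin.lt_iff_val_lt_val, eC_apply, eC_apply]
    exact fC_strictAnti_inl (mem_box_iff.mp hα).2 hxy
  · intro x
    rw [Sset_Phi, Finset.mem_image]
    exact ⟨x, Finset.mem_univ _, rfl⟩

lemma embT_Phi (α : Fin a → ℕ) (hα : α ∈ _root_.box a b) (σ : Equiv.Perm (Fin a))
    (τ : Equiv.Perm (Fin b)) (x : Fin b) :
    (Tset a b (Phi a b α hα σ τ)).orderEmbOfFin (card_Tset _) x = eC α hα (.inr x.rev) := by
  apply orderEmb_eq_of_strictAnti _ _ (fun j => eC α hα (.inr j))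
  · intro x y hxy
    rw [Fin.lt_iff_val_lt_val, eC_apply, eC_apply]
    exact fC_strictAnti_inr hxy
  · intro x
    rw [Tset_Phi, Finset.mem_image]
    exact ⟨x, Finset.mem_univ _, rfl⟩

lemma alph_Phi (α : Fin a → ℕ) (hα : α ∈ _root_.box a b) (σ : Equiv.Perm (Fin a))
    (τ : Equiv.Perm (Fin b)) : alph a b (Phi a b α hα σ τ) = α := by
  funext i
  unfold alph
  rw [embS_Phi α hα σ τ]
  have h1 : (eC α hα (.inl i.rev.rev) : ℕ) = fC a b α (.inl i.rev.rev) := rfl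
  rw [Fin.rev_rev] at h1 ⊢
  rw [h1]
  simp only [fC, Sum.elim_inl]
  have hi := i.isLt
  omega

lemma sigm_Phi (α : Fin a → ℕ) (hα : α ∈ _root_.box a b) (σ : Equiv.Perm (Fin a))
    (τ : Equiv.Perm (Fin b)) : sigm a b (Phi a b α hα σ τ) = σ := by
  apply Equiv.ext
  intro i
  simp only [sigm, Equiv.trans_apply, Fin.revPerm_apply]
  have hmem : finSumFinEquiv (Phi a b α hα σ τ (.inl i)) ∈ Sset a b (Phi a b α hα σ τ) := by
    rw [Sset, Finset.mem_image]; exact ⟨i, Finset.mem_univ _, rfl⟩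
  have key : (⟨finSumFinEquiv (Phi a b α hα σ τ (.inl i)), hmem⟩
      : {x // x ∈ Sset a b (Phi a b α hα σ τ)})
      = (Sset a b (Phi a b α hα σ τ)).orderIsoOfFin (card_Sset _) ((σ i).rev) := by
    apply Subtype.ext
    rw [Finset.coe_orderIsoOfFin_apply, embS_Phi α hα σ τ, Fin.rev_rev]
    show finSumFinEquiv (Phi a b α hα σ τ (.inl i)) = eC α hα (.inl (σ i))
    rw [Phi_inl, Equiv.apply_symm_apply]
  show (((Sset a b (Phi a b α hα σ τ)).orderIsoOfFin (card_Sset _)).symm.toEquiv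
      (⟨finSumFinEquiv (Phi a b α hα σ τ (.inl i)), hmem⟩)).rev = σ i
  rw [key]
  simp

lemma taum_Phi (α : Fin a → ℕ) (hα : α ∈ _root_.box a b) (σ : Equiv.Perm (Fin a))
    (τ : Equiv.Perm (Fin b)) : taum a b (Phi a b α hα σ τ) = τ := by
  apply Equiv.ext
  intro j
  simp only [taum, Equiv.trans_apply, Fin.revPerm_apply]
  have hmem : finSumFinEquiv (Phi a b α hα σ τ (.inr j)) ∈ Tset a b (Phi a b α hα σ τ) := by
    rw [Tset, Finset.mem_image]; exact ⟨j, Finset.mem_univ _, rfl⟩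
  have key : (⟨finSumFinEquiv (Phi a b α hα σ τ (.inr j)), hmem⟩
      : {x // x ∈ Tset a b (Phi a b α hα σ τ)})
      = (Tset a b (Phi a b α hα σ τ)).orderIsoOfFin (card_Tset _) ((τ j).rev) := by
    apply Subtype.ext
    rw [Finset.coe_orderIsoOfFin_apply, embT_Phi α hα σ τ, Fin.rev_rev]
    show finSumFinEquiv (Phi a b α hα σ τ (.inr j)) = eC α hα (.inr (τ j))
    rw [Phi_inr, Equiv.apply_symm_apply]
  show (((Tset a b (Phi a b α hα σ τ)).orderIsoOfFin (card_Tset _)).symm.toEquiv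
      (⟨finSumFinEquiv (Phi a b α hα σ τ (.inr j)), hmem⟩)).rev = τ j
  rw [key]
  simp

end Laplace3

section DetExpand
variable {a b : ℕ}

noncomputable def Theta (a b : ℕ) :
    ({x // x ∈ _root_.box a b} × Equiv.Perm (Fin a) × Equiv.Perm (Fin b))
      ≃ Equiv.Perm (Fin a ⊕ Fin b) where
  toFun t := Phi a b t.1.1 t.1.2 t.2.1 t.2.2
  invFun π := (⟨alph a b π, alph_mem_box π⟩, sigm a b π, taum a b π)
  left_inv t := by
    obtain ⟨⟨α, hα⟩, σ, τ⟩ := t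
    refine Prod.ext ?_ (Prod.ext ?_ ?_)
    · exact Subtype.ext (alph_Phi α hα σ τ)
    · exact sigm_Phi α hα σ τ
    · exact taum_Phi α hα σ τ
  right_inv π := Phi_RT2 π

variable {R : Type*} [CommRing R]

lemma Dmat_inl_entry (A : Fin a → R) (B : Fin b → R) (α : Fin a → ℕ)
    (hα : α ∈ _root_.box a b) (σ : Equiv.Perm (Fin a)) (τ : Equiv.Perm (Fin b)) (i : Fin a) :
    Dmat A B (.inl i) (Phi a b α hα σ τ (.inl i))
      = hZ A ((α (σ i) : ℤ) + (i : ℕ) - ((σ i : Fin a) : ℕ)) := by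
  have hval : (finSumFinEquiv (Phi a b α hα σ τ (.inl i)) : ℕ)
      = α (σ i) + (a - 1 - ((σ i : Fin a) : ℕ)) := by
    rw [Phi_inl, Equiv.apply_symm_apply]
    rfl
  show hZ A (((finSumFinEquiv (Phi a b α hα σ τ (.inl i)) : ℕ) : ℤ)
      - ((a - 1 - (i : ℕ) : ℕ) : ℤ)) = _
  rw [hval]
  congr 1
  have h1 := i.isLt
  have h2 := (σ i).isLt
  omega

lemma Dmat_inr_entry (A : Fin a → R) (B : Fin b → R) (α : Fin a → ℕ)
    (hα : α ∈ _root_.box a b) (σ : Equiv.Perm (Fin a)) (τ : Equiv.Perm (Fin b)) (j : Fin b) :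
    Dmat A B (.inr j) (Phi a b α hα σ τ (.inr j))
      = hZ B ((compTr a b α (τ j) : ℤ) + (j : ℕ) - ((τ j : Fin b) : ℕ)) := by
  have hval : (finSumFinEquiv (Phi a b α hα σ τ (.inr j)) : ℕ)
      = compTr a b α (τ j) + (b - 1 - ((τ j : Fin b) : ℕ)) := by
    rw [Phi_inr, Equiv.apply_symm_apply]
    rfl
  show hZ B (((finSumFinEquiv (Phi a b α hα σ τ (.inr j)) : ℕ) : ℤ)
      - ((b - 1 - (j : ℕ) : ℕ) : ℤ)) = _
  rw [hval]
  congr 1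
  have h1 := j.isLt
  have h2 := (τ j).isLt
  omega

lemma sign_Phi (α : Fin a → ℕ) (hα : α ∈ _root_.box a b) (σ : Equiv.Perm (Fin a))
    (τ : Equiv.Perm (Fin b)) :
    Equiv.Perm.sign (Phi a b α hα σ τ)
      = Equiv.Perm.sign (rC α hα) * (Equiv.Perm.sign σ * Equiv.Perm.sign τ) := by
  have : Phi a b α hα σ τ = (rC α hα) * (Equiv.sumCongr σ τ) := rfl
  rw [this, map_mul, Equiv.Perm.sign_sumCongr]

lemma det_Dmat_eq (A : Fin a → R) (B : Fin b → R) :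
    (Dmat A B).det = ∑ α ∈ (_root_.box a b).attach,
        ((Equiv.Perm.sign (rC α.1 α.2) : ℤ) : R)
          * (schur A α.1 * schur B (compTr a b α.1)) := by
  classical
  rw [← Matrix.det_transpose (Dmat A B), Matrix.det_apply']
  rw [← Equiv.sum_comp (Theta a b)
    (fun π => ((Equiv.Perm.sign π : ℤ) : R) * ∏ r, (Dmat A B).transpose (π r) r)]
  rw [Fintype.sum_prod_type, ← Finset.univ_eq_attach]
  refine Finset.sum_congr rfl (fun x _ => ?_)
  obtain ⟨α, hα⟩ := x
  rw [Fintype.sum_prod_type]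
  rw [schur, schur, Matrix.det_apply', Matrix.det_apply', Finset.sum_mul_sum,
    Finset.mul_sum]
  refine Finset.sum_congr rfl (fun σ _ => ?_)
  rw [Finset.mul_sum]
  refine Finset.sum_congr rfl (fun τ _ => ?_)
  have hprod : (∏ r, (Dmat A B).transpose ((Theta a b (⟨α, hα⟩, σ, τ)) r) r)
      = (∏ i, Dmat A B (.inl i) (Phi a b α hα σ τ (.inl i)))
        * ∏ j, Dmat A B (.inr j) (Phi a b α hα σ τ (.inr j)) := by
    have hr : ∀ r, (Dmat A B).transpose ((Theta a b (⟨α, hα⟩, σ, τ)) r) r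
        = (fun r => Dmat A B r (Phi a b α hα σ τ r)) r := fun r => rfl
    rw [Finset.prod_congr rfl (fun r _ => hr r)]
    exact Fintype.prod_sum_type (fun r => Dmat A B r (Phi a b α hα σ τ r))
  rw [hprod]
  have hsign : ((Equiv.Perm.sign (Theta a b (⟨α, hα⟩, σ, τ)) : ℤ) : R)
      = ((Equiv.Perm.sign (rC α hα) : ℤ) : R)
        * (((Equiv.Perm.sign σ : ℤ) : R) * ((Equiv.Perm.sign τ : ℤ) : R)) := by
    show ((Equiv.Perm.sign (Phi a b α hα σ τ) : ℤ) : R) = _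
    rw [sign_Phi]
    push_cast
    ring
  rw [hsign]
  have e1 : ∀ i : Fin a, Dmat A B (.inl i) (Phi a b α hα σ τ (.inl i))
      = (Matrix.of fun i j : Fin a => hZ A ((α i : ℤ) + (j : ℕ) - (i : ℕ))) (σ i) i :=
    fun i => Dmat_inl_entry A B α hα σ τ i
  have e2 : ∀ j : Fin b, Dmat A B (.inr j) (Phi a b α hα σ τ (.inr j))
      = (Matrix.of fun i j : Fin b => hZ B ((compTr a b α i : ℤ) + (j : ℕ) - (i : ℕ))) (τ j) j :=
    fun j => Dmat_inr_entry A B α hα σ τ j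
  rw [Finset.prod_congr rfl (fun i _ => e1 i), Finset.prod_congr rfl (fun j _ => e2 j)]
  ring

end DetExpand

section Wt
variable {a b : ℕ}

lemma wt_le {α : Fin a → ℕ} (hb : ∀ i, α i ≤ b) : wt α ≤ a * b := by
  unfold wt
  calc ∑ i, α i ≤ ∑ _i : Fin a, b := Finset.sum_le_sum (fun i _ => hb i)
  _ = a * b := by simp [mul_comm]

lemma card_filter_le_val {t : ℕ} (ht : t ≤ b) :
    (Finset.univ.filter fun j : Fin b => t ≤ (j : ℕ)).card = b - t := by
  rcases Nat.eq_or_lt_of_le ht with heq | hlt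
  · subst heq
    rw [Finset.filter_false_of_mem (fun j _ => by have := j.isLt; omega)]
    simp
  · have : (Finset.univ.filter fun j : Fin b => t ≤ (j : ℕ)) = Finset.Ici (⟨t, hlt⟩ : Fin b) := by
      ext j
      simp [Finset.mem_Ici, Fin.le_def]
    rw [this, Fin.card_Ici]

lemma sum_cnt {α : Fin a → ℕ} (hb : ∀ i, α i ≤ b) :
    ∑ j : Fin b, cnt α (b - (j : ℕ)) = wt α := by
  unfold cnt wt
  have h1 : ∀ j : Fin b, (Finset.univ.filter fun i : Fin a => b - (j : ℕ) ≤ α i).card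
      = ∑ i : Fin a, if b - (j : ℕ) ≤ α i then 1 else 0 := fun j => Finset.card_filter _ _
  rw [Finset.sum_congr rfl (fun j _ => h1 j), Finset.sum_comm]
  refine Finset.sum_congr rfl (fun i _ => ?_)
  have h2 : ∀ j : Fin b, (if b - (j : ℕ) ≤ α i then (1 : ℕ) else 0)
      = (if b - α i ≤ (j : ℕ) then (1 : ℕ) else 0) := by
    intro j
    have := j.isLt
    congr 1
    simp only [eq_iff_iff]
    omega
  rw [Finset.sum_congr rfl (fun j _ => h2 j), ← Finset.card_filter,
    card_filter_le_val (by omega)]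
  have := hb i
  omega

lemma wt_compTr {α : Fin a → ℕ} (hb : ∀ i, α i ≤ b) :
    wt (compTr a b α) = a * b - wt α := by
  have h2 : ∀ j : Fin b, cnt α (b - (j : ℕ)) ≤ a := fun j => cnt_le _ _
  have key : ∑ j : Fin b, cnt α (b - (j : ℕ))
      + ∑ j : Fin b, (a - cnt α (b - (j : ℕ))) = a * b := by
    rw [← Finset.sum_add_distrib]
    have hterm : ∀ j : Fin b, cnt α (b - (j : ℕ)) + (a - cnt α (b - (j : ℕ))) = a := by
      intro j
      have := h2 j
      omega
    rw [Finset.sum_congr rfl (fun j _ => hterm j)]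
    simp [mul_comm]
  have hw := sum_cnt hb
  have hle := wt_le hb
  have hsum : wt (compTr a b α) = ∑ j : Fin b, (a - cnt α (b - (j : ℕ))) := by
    unfold wt
    exact Finset.sum_congr rfl (fun j _ => compTr_apply α j)
  omega

end Wt

section Sign
variable {a b : ℕ}

lemma swap_conj {β γ : Type*} [DecidableEq β] [DecidableEq γ] (e : β ≃ γ) (x y z : β) :
    e (Equiv.swap x y z) = Equiv.swap (e x) (e y) (e z) := by
  by_cases hzx : z = x
  · subst hzx; rw [Equiv.swap_apply_left, Equiv.swap_apply_left]
  by_cases hzy : z = y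
  · subst hzy; rw [Equiv.swap_apply_right, Equiv.swap_apply_right]
  · rw [Equiv.swap_apply_of_ne_of_ne hzx hzy,
      Equiv.swap_apply_of_ne_of_ne (fun h => hzx (e.injective h))
        (fun h => hzy (e.injective h))]

lemma zero_mem_box : (fun _ : Fin a => 0) ∈ _root_.box a b :=
  mem_box_iff.mpr ⟨fun _ => Nat.zero_le _, fun _ _ _ => le_refl _⟩

lemma sign_rC_step (α : Fin a → ℕ) (hα : α ∈ _root_.box a b) (hw : 0 < wt α) :
    ∃ (α' : Fin a → ℕ) (hα' : α' ∈ _root_.box a b), wt α' + 1 = wt α ∧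
      Equiv.Perm.sign (rC α hα) = - Equiv.Perm.sign (rC α' hα') := by
  classical
  obtain ⟨hb, hdec⟩ := mem_box_iff.mp hα
  have hne : (Finset.univ.filter fun i : Fin a => 0 < α i).Nonempty := by
    by_contra hc
    rw [Finset.not_nonempty_iff_eq_empty, Finset.filter_eq_empty_iff] at hc
    have : wt α = 0 := Finset.sum_eq_zero (fun i _ => by have := hc (Finset.mem_univ i); omega)
    omega
  set i0 := (Finset.univ.filter fun i : Fin a => 0 < α i).max' hne with hi0
  have hi0pos : 0 < α i0 :=
    (Finset.mem_filter.mp (Finset.max'_mem _ hne)).2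
  have hafter : ∀ i : Fin a, i0 < i → α i = 0 := by
    intro i hlt
    by_contra h0
    have hmem : i ∈ (Finset.univ.filter fun i : Fin a => 0 < α i) := by
      simp only [Finset.mem_filter, Finset.mem_univ, true_and]
      omega
    exact absurd (Finset.le_max' _ i hmem) (not_le.mpr hlt)
  have hi0a := i0.isLt
  have hbi0 := hb i0
  set α' := Function.update α i0 (α i0 - 1) with hα'def
  have hα'app : ∀ i, α' i = if i = i0 then α i0 - 1 else α i :=
    fun i => Function.update_apply α i0 (α i0 - 1) i
  have hb' : ∀ i, α' i ≤ b := by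
    intro i
    rw [hα'app]
    split <;> [omega; exact hb i]
  have hdec' : ∀ i j : Fin a, i ≤ j → α' j ≤ α' i := by
    intro i j hij
    rw [hα'app, hα'app]
    by_cases hji : j = i0
    · rw [if_pos hji]
      by_cases hii : i = i0
      · rw [if_pos hii]
      · rw [if_neg hii]
        have h2 := hdec i i0 (le_of_le_of_eq hij hji)
        have h3 : α i0 ≤ α i := by rw [← hji]; exact hdec i j hij
        omega
    · rw [if_neg hji]
      by_cases hii : i = i0
      · rw [if_pos hii]
        have hlt : i0 < j := by
          rw [hii] at hij
          exact lt_of_le_of_ne hij (fun h => hji h.symm)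
        rw [hafter j hlt]
        omega
      · rw [if_neg hii]
        exact hdec i j hij
  have hα' : α' ∈ _root_.box a b := mem_box_iff.mpr ⟨hb', hdec'⟩
  have hwt : wt α' + 1 = wt α := by
    unfold wt
    rw [hα'def, Finset.sum_update_of_mem (Finset.mem_univ i0)]
    have := Finset.add_sum_erase Finset.univ α (Finset.mem_univ i0)
    rw [Finset.erase_eq] at this
    omega
  have hcnt_ne : ∀ m, m ≠ α i0 → cnt α' m = cnt α m := by
    intro m hm
    unfold cnt
    congr 1
    apply Finset.filter_congr
    intro i _
    rw [hα'app]
    split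
    · rename_i hii
      rw [hii]
      omega
    · exact Iff.rfl
  have hcnt_eq : cnt α (α i0) = (i0 : ℕ) + 1 := by
    unfold cnt
    have hset : (Finset.univ.filter fun i : Fin a => α i0 ≤ α i) = Finset.Iic i0 := by
      ext i
      simp only [Finset.mem_filter, Finset.mem_univ, true_and, Finset.mem_Iic]
      constructor
      · intro hle
        by_contra hgt
        rw [not_le] at hgt
        rw [hafter i hgt] at hle
        omega
      · intro hle
        exact hdec i i0 hle
    rw [hset, Fin.card_Iic]
  have hcnt_eq' : cnt α' (α i0) = (i0 : ℕ) := by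
    unfold cnt
    have hset : (Finset.univ.filter fun i : Fin a => α i0 ≤ α' i) = Finset.Iio i0 := by
      ext i
      simp only [Finset.mem_filter, Finset.mem_univ, true_and, Finset.mem_Iio]
      rw [hα'app]
      constructor
      · intro hle
        by_cases hii : i = i0
        · rw [if_pos hii] at hle; omega
        · rw [if_neg hii] at hle
          rcases lt_or_gt_of_ne (fun h => hii (Fin.ext h) : (i : ℕ) ≠ (i0 : ℕ)) with h | h
          · exact h
          · rw [hafter i h] at hle; omega
      · intro hlt
        have hii : i ≠ i0 := Fin.ne_of_lt hlt
        rw [if_neg hii]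
        exact hdec i i0 (le_of_lt hlt)
    rw [hset, Fin.card_Iio]
  have hbpos : 0 < b := by omega
  set j0 : Fin b := ⟨b - α i0, by omega⟩ with hj0
  set v : ℕ := α i0 + (a - 1 - (i0 : ℕ)) with hv
  have hj0val : (j0 : ℕ) = b - α i0 := rfl
  have hself : α' i0 = α i0 - 1 := by rw [hα'app, if_pos rfl]
  have f1 : fC a b α (.inl i0) = v := rfl
  have f2 : fC a b α' (.inl i0) = v - 1 := by
    simp only [fC, Sum.elim_inl, hself]
    omega
  have f3 : fC a b α (.inr j0) = v - 1 := by
    simp only [fC, Sum.elim_inr]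
    rw [compTr_apply]
    have hb0 : b - (j0 : ℕ) = α i0 := by rw [hj0val]; omega
    rw [hb0, hcnt_eq]
    omega
  have f4 : fC a b α' (.inr j0) = v := by
    simp only [fC, Sum.elim_inr]
    rw [compTr_apply]
    have hb0 : b - (j0 : ℕ) = α i0 := by rw [hj0val]; omega
    rw [hb0, hcnt_eq']
    omega
  have f5 : ∀ i : Fin a, i ≠ i0 → fC a b α' (.inl i) = fC a b α (.inl i) := by
    intro i hi
    simp only [fC, Sum.elim_inl, hα'app, if_neg hi]
  have f6 : ∀ j : Fin b, j ≠ j0 → fC a b α' (.inr j) = fC a b α (.inr j) := by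
    intro j hj
    simp only [fC, Sum.elim_inr]
    rw [compTr_apply, compTr_apply, hcnt_ne]
    have hjb := j.isLt
    have : (j : ℕ) ≠ b - α i0 := fun h => hj (Fin.ext (by simp [hj0, h]))
    omega
  have hvlt : v < a + b := by omega
  have hvpos : 0 < v := by omega
  set V : Fin (a + b) := ⟨v, hvlt⟩ with hV
  set V' : Fin (a + b) := ⟨v - 1, by omega⟩ with hV'
  have heq : ∀ r, eC α hα r = Equiv.swap V V' (eC α' hα' r) := by
    intro r
    match r with
    | .inl i =>
      by_cases hii : i = i0
      · have h1 : eC α' hα' (.inl i) = V' := Fin.ext (by rw [eC_apply, hii, f2])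
        have h2 : eC α hα (.inl i) = V := Fin.ext (by rw [eC_apply, hii, f1])
        rw [h1, h2, Equiv.swap_apply_right]
      · have hnev : eC α' hα' (.inl i) ≠ V := by
          intro hc
          have : fC a b α' (.inl i) = fC a b α' (.inr j0) := by
            rw [f4]
            exact congrArg Fin.val hc
          exact fC_disjoint hdec' i j0 this
        have hnev' : eC α' hα' (.inl i) ≠ V' := by
          intro hc
          have : fC a b α' (.inl i) = fC a b α' (.inl i0) := by
            rw [f2]
            exact congrArg Fin.val hc
          exact hii (Sum.inl_injective (fC_injective hdec' this))
        rw [Equiv.swap_apply_of_ne_of_ne hnev hnev']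
        exact Fin.ext (by rw [eC_apply, eC_apply, f5 i hii])
    | .inr j =>
      by_cases hjj : j = j0
      · have h1 : eC α' hα' (.inr j) = V := Fin.ext (by rw [eC_apply, hjj, f4])
        have h2 : eC α hα (.inr j) = V' := Fin.ext (by rw [eC_apply, hjj, f3])
        rw [h1, h2, Equiv.swap_apply_left]
      · have hnev : eC α' hα' (.inr j) ≠ V := by
          intro hc
          have : fC a b α' (.inr j) = fC a b α' (.inr j0) := by
            rw [f4]
            exact congrArg Fin.val hc
          exact hjj (Sum.inr_injective (fC_injective hdec' this))
        have hnev' : eC α' hα' (.inr j) ≠ V' := by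
          intro hc
          have : fC a b α' (.inr j) = fC a b α' (.inl i0) := by
            rw [f2]
            exact congrArg Fin.val hc
          exact fC_disjoint hdec' i0 j this.symm
        rw [Equiv.swap_apply_of_ne_of_ne hnev hnev']
        exact Fin.ext (by rw [eC_apply, eC_apply, f6 j hjj])
  have hperm : rC α hα = (rC α' hα').trans
      (Equiv.swap (finSumFinEquiv.symm V) (finSumFinEquiv.symm V')) := by
    apply Equiv.ext
    intro r
    show finSumFinEquiv.symm (eC α hα r) = _
    rw [heq r]
    exact swap_conj finSumFinEquiv.symm V V' (eC α' hα' r)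
  refine ⟨α', hα', hwt, ?_⟩
  rw [hperm]
  have : (rC α' hα').trans (Equiv.swap (finSumFinEquiv.symm V) (finSumFinEquiv.symm V'))
      = Equiv.swap (finSumFinEquiv.symm V) (finSumFinEquiv.symm V') * (rC α' hα') := rfl
  rw [this, map_mul, Equiv.Perm.sign_swap]
  · rw [neg_one_mul]
  · intro hc
    have := finSumFinEquiv.symm.injective hc
    rw [hV, hV'] at this
    have := congrArg Fin.val this
    simp at this
    omega
end Sign

section Final
variable {a b : ℕ}

lemma sign_rC_eq (n : ℕ) : ∀ (α : Fin a → ℕ) (hα : α ∈ _root_.box a b), wt α = n →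
    Equiv.Perm.sign (rC α hα)
      = (-1) ^ n * Equiv.Perm.sign (rC (fun _ : Fin a => 0) (zero_mem_box (b := b))) := by
  induction n with
  | zero =>
    intro α hα hwt
    have hz : α = fun _ => 0 := by
      funext i
      have := Finset.sum_eq_zero_iff.mp (hwt : ∑ i, α i = 0)
      exact this i (Finset.mem_univ i)
    subst hz
    rw [pow_zero, one_mul]
  | succ n ih =>
    intro α hα hwt
    obtain ⟨α', hα', hwt', hsign⟩ := sign_rC_step α hα (by omega)
    rw [hsign, ih α' hα' (by omega), pow_succ, mul_assoc, neg_one_mul, mul_neg]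

theorem statement2' {R : Type*} [CommRing R] (A : Fin a → R) (B : Fin b → R)
    (h : ∃ (i : Fin a) (j : Fin b), A i = B j) :
    ∑ α ∈ _root_.box a b,
        (-1 : R) ^ wt (compTr a b α) * schur A α * schur B (compTr a b α) = 0 := by
  classical
  have hdet0 : (Dmat A B).det = 0 := det_Dmat_zero A B h
  have hexp := det_Dmat_eq (R := R) A B
  rw [hdet0] at hexp
  have hsum : ∑ α ∈ (_root_.box a b).attach,
      ((Equiv.Perm.sign (rC α.1 α.2) : ℤ) : R)
        * (schur A α.1 * schur B (compTr a b α.1)) = 0 := hexp.symm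
  set s0 : ℤˣ := Equiv.Perm.sign (rC (fun _ : Fin a => 0) zero_mem_box) with hs0
  have h4 : ((s0 : ℤ) : R) * ((s0 : ℤ) : R) = 1 := by
    rw [← Int.cast_mul, ← Units.val_mul, Int.units_mul_self]
    simp
  have key : ∀ (α : Fin a → ℕ) (hα : α ∈ _root_.box a b),
      (-1 : R) ^ wt (compTr a b α) * schur A α * schur B (compTr a b α)
        = ((-1 : R) ^ (a * b) * ((s0 : ℤ) : R))
          * (((Equiv.Perm.sign (rC α hα) : ℤ) : R)
            * (schur A α * schur B (compTr a b α))) := by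
    intro α hα
    have h1 : Equiv.Perm.sign (rC α hα) = (-1) ^ (wt α) * s0 := sign_rC_eq (wt α) α hα rfl
    have hble := (mem_box_iff.mp hα).1
    have h2 : wt (compTr a b α) = a * b - wt α := wt_compTr hble
    have h3 : wt α ≤ a * b := wt_le hble
    have hcast : ((Equiv.Perm.sign (rC α hα) : ℤ) : R) = (-1 : R) ^ (wt α) * ((s0 : ℤ) : R) := by
      rw [h1]
      push_cast
      ring
    rw [hcast, h2]
    have hpow : (-1 : R) ^ (a * b) * (-1 : R) ^ (wt α) = (-1 : R) ^ (a * b - wt α) := by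
      rw [← pow_add]
      have he : a * b + wt α = (a * b - wt α) + 2 * (wt α) := by omega
      rw [he, pow_add, pow_mul]
      norm_num
    rw [← hpow]
    linear_combination (-((-1 : R) ^ (a * b) * (-1 : R) ^ (wt α) * schur A α
      * schur B (compTr a b α))) * h4
  rw [← Finset.sum_attach (_root_.box a b)
    (fun α => (-1 : R) ^ wt (compTr a b α) * schur A α * schur B (compTr a b α))]
  rw [Finset.sum_congr rfl (fun α _ => key α.1 α.2)]
  rw [← Finset.mul_sum, hsum, mul_zero]

end Final


/-- if `A_i = B_j` for some `i, j`, then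
`Σ_{α ∈ P(a,b)} (−1)^{|α̂^t|} s_α(𝔸) · s_{α̂^t}(𝔹) = 0`. -/
theorem statement2 {R : Type*} [CommRing R] {a b : ℕ} (A : Fin a → R) (B : Fin b → R)
    (h : ∃ (i : Fin a) (j : Fin b), A i = B j) :
    ∑ α ∈ box a b,
        (-1 : R) ^ wt (compTr a b α) * schur A α * schur B (compTr a b α) = 0 := by
  exact statement2' A B h
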